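/- Let y, y' ∈ ℂ^W with y[0]·y[W−1] ≠ 0, and suppose all roots of ŷ(ω) lie on the unit circle. If |ŷ'(ω)|² = |ŷ(ω)|² for all ω with |ω| = 1, then y' = e^{iθ} y for some real θ. -/

import Mathlib

open Polynomial Complex

/-- The unit circle in ℂ is infinite. -/
lemma aux_circle_infinite : {z : ℂ | ‖z‖ = 1}.Infinite := by
  apply Set.infinite_of_injective_forall_mem
    (f := fun n : ℕ => Complex.exp ((1 / (n + 1) : ℝ) * Complex.I))
  · intro n m h
    rw [Complex.exp_eq_exp_iff_exists_int] at h
    obtain ⟨k, hk⟩ := h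
    have hre : ((1 / (n + 1) : ℝ) : ℂ) = ((1 / (m + 1) : ℝ) : ℂ) + k * (2 * Real.pi) := by
      have hI : (Complex.I : ℂ) ≠ 0 := Complex.I_ne_zero
      have h2 : ((1 / (n + 1) : ℝ) : ℂ) * Complex.I
          = (((1 / (m + 1) : ℝ) : ℂ) + k * (2 * Real.pi)) * Complex.I := by
        rw [hk]; ring
      exact mul_right_cancel₀ hI h2
    have hre' : (1 / (n + 1) : ℝ) = (1 / (m + 1) : ℝ) + (k : ℝ) * (2 * Real.pi) := by
      exact_mod_cast hre
    have hk0 : k = 0 := by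
      by_contra hk0
      have h1 : (1 : ℝ) ≤ |(k : ℝ)| := by
        exact_mod_cast Int.one_le_abs (by exact_mod_cast hk0)
      have hpi : (2 : ℝ) ≤ 2 * Real.pi := by nlinarith [Real.pi_gt_three]
      have hn1 : (0 : ℝ) < 1 / (n + 1) := by positivity
      have hn2 : (1 / (n + 1) : ℝ) ≤ 1 := by
        rw [div_le_one (by positivity)]; linarith [Nat.cast_nonneg (α := ℝ) n]
      have hm1 : (0 : ℝ) < 1 / (m + 1) := by positivity
      have hm2 : (1 / (m + 1) : ℝ) ≤ 1 := by
        rw [div_le_one (by positivity)]; linarith [Nat.cast_nonneg (α := ℝ) m]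
      have habs : |(k : ℝ) * (2 * Real.pi)| = |(k : ℝ)| * (2 * Real.pi) := by
        rw [abs_mul, _root_.abs_of_nonneg (show (0:ℝ) ≤ 2 * Real.pi by positivity)]
      have : |(k : ℝ) * (2 * Real.pi)| < 1 := by
        rw [hre'] at hn2
        rw [abs_lt]; constructor <;> nlinarith
      nlinarith [abs_nonneg ((k:ℝ))]
    rw [hk0] at hre'
    norm_num at hre'
    exact hre'
  · intro n
    exact Complex.norm_exp_ofReal_mul_I _

lemma aux_conj_eq_inv {ω : ℂ} (hω : ‖ω‖ = 1) : (starRingEnd ℂ) ω = ω⁻¹ := by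
  have h1 : ω * (starRingEnd ℂ) ω = 1 := by
    rw [Complex.mul_conj]
    norm_cast
    rw [Complex.normSq_eq_norm_sq, hω]; norm_num
  have hω0 : ω ≠ 0 := by
    intro h; rw [h] at hω; simp at hω
  field_simp
  rw [mul_comm]; exact h1

lemma aux_eval_rev (p : ℂ[X]) {ω : ℂ} (hω : ‖ω‖ = 1) :
    eval ω (reverse (p.map (starRingEnd ℂ)))
      = ω ^ p.natDegree * (starRingEnd ℂ) (eval ω p) := by
  have hω0 : ω ≠ 0 := by intro h; rw [h] at hω; simp at hω
  haveI : Invertible (ω⁻¹) := invertibleOfNonzero (inv_ne_zero hω0)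
  have h := Polynomial.eval₂_reverse_mul_pow (RingHom.id ℂ) (ω⁻¹) (p.map (starRingEnd ℂ))
  rw [invOf_eq_inv, inv_inv] at h
  have hdeg : (p.map (starRingEnd ℂ)).natDegree = p.natDegree :=
    natDegree_map_eq_of_injective (RingHom.injective _) p
  have hid : ∀ (q : ℂ[X]) (x : ℂ), eval₂ (RingHom.id ℂ) x q = eval x q := fun q x => rfl
  rw [hid, hid, hdeg] at h
  have hB : eval ω⁻¹ (p.map (starRingEnd ℂ)) = (starRingEnd ℂ) (eval ω p) := by
    rw [← aux_conj_eq_inv hω, eval_map, Polynomial.eval₂_at_apply]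
  rw [hB] at h
  have := congrArg (fun z => z * ω ^ p.natDegree) h
  rw [mul_assoc, ← mul_pow, inv_mul_cancel₀ hω0, one_pow, mul_one] at this
  rw [this, mul_comm]

lemma aux_rev_one : reverse (1 : ℂ[X]) = 1 := by
  rw [← C_1, reverse_C]

lemma aux_rev_prod (s : Multiset ℂ[X]) : reverse s.prod = (s.map reverse).prod := by
  induction s using Multiset.induction_on with
  | empty => simp [aux_rev_one]
  | cons a s ih => simp [reverse_mul_of_domain, ih]

lemma aux_rev_lin (b : ℂ) : reverse (X - C b : ℂ[X]) = 1 - C b * X := by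
  rw [reverse, natDegree_X_sub_C, reflect_sub, reflect_one_X, reflect_C, pow_one]

lemma aux_dagger (p : ℂ[X]) (hp : p ≠ 0) (h : ∀ z : ℂ, eval z p = 0 → ‖z‖ = 1) :
    ∃ c : ℂ, c ≠ 0 ∧ reverse (p.map (starRingEnd ℂ)) = C c * p := by
  set q := p.map (starRingEnd ℂ) with hqdef
  have hq0 : q ≠ 0 := by
    rw [hqdef, Ne, Polynomial.map_eq_zero_iff (RingHom.injective _)]
    exact hp
  set a := q.leadingCoeff with ha
  have ha0 : a ≠ 0 := leadingCoeff_ne_zero.mpr hq0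
  set s := q.roots with hs
  have hfac : q = C a * (s.map fun b => X - C b).prod :=
    (IsAlgClosed.splits q).eq_prod_roots
  have hb : ∀ b ∈ s, b * (starRingEnd ℂ) b = 1 := by
    intro b hbq
    have hroot : eval b q = 0 := by
      exact (Polynomial.mem_roots hq0).1 hbq
    have hqb : eval b q = (starRingEnd ℂ) (eval ((starRingEnd ℂ) b) p) := by
      conv_lhs => rw [hqdef, eval_map,
        show b = (starRingEnd ℂ) ((starRingEnd ℂ) b) from (Complex.conj_conj b).symm,
        Polynomial.eval₂_at_apply]
    have hpb : eval ((starRingEnd ℂ) b) p = 0 := by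
      have := hqb ▸ hroot
      exact star_eq_zero.mp this
    have habs : ‖b‖ = 1 := by
      have := h _ hpb
      rwa [Complex.norm_conj] at this
    rw [Complex.mul_conj]
    norm_cast
    rw [Complex.normSq_eq_norm_sq, habs]; norm_num
  -- p in terms of the roots of q
  have hpq : p = q.map (starRingEnd ℂ) := by
    rw [hqdef, Polynomial.map_map]
    have : (starRingEnd ℂ).comp (starRingEnd ℂ) = RingHom.id ℂ :=
      RingHom.ext fun z => Complex.conj_conj z
    rw [this, Polynomial.map_id]
  have hpfac : p = C ((starRingEnd ℂ) a) * (s.map fun b => X - C ((starRingEnd ℂ) b)).prod := by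
    conv_lhs => rw [hpq, hfac]
    rw [Polynomial.map_mul, map_C, Polynomial.map_multiset_prod, Multiset.map_map]
    congr 1
    apply congrArg Multiset.prod
    apply Multiset.map_congr rfl
    intro b _
    simp
  -- compute reverse q
  have hrev : reverse q = C (a * (s.map fun b => -b).prod * (((starRingEnd ℂ) a)⁻¹)) * p := by
    conv_lhs => rw [hfac]
    rw [reverse_mul_of_domain, reverse_C, aux_rev_prod, Multiset.map_map]
    have hmap : (s.map fun b => reverse (X - C b))
        = s.map fun b => C (-b) * (X - C ((starRingEnd ℂ) b)) := by
      apply Multiset.map_congr rfl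
      intro b hbs
      rw [aux_rev_lin]
      have h2 : C (-b) * (X - C ((starRingEnd ℂ) b))
          = -(C b) * X + C (b * (starRingEnd ℂ) b) := by
        rw [C_neg, C_mul]; ring
      rw [h2, hb b hbs, C_1]; ring
    rw [show (Multiset.map (reverse ∘ fun b => X - C b) s)
        = s.map fun b => reverse (X - C b) from rfl, hmap]
    rw [Multiset.prod_map_mul]
    have hC : (s.map fun b => C (-b)).prod = C ((s.map fun b => -b).prod) := by
      rw [show (s.map fun b => C (-b)) = (s.map fun b => -b).map C by
        rw [Multiset.map_map]; rfl]
      exact (map_multiset_prod (C : ℂ →+* ℂ[X]) _).symm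
    rw [hC]
    have hprodp : (s.map fun b => X - C ((starRingEnd ℂ) b)).prod
        = C (((starRingEnd ℂ) a)⁻¹) * p := by
      rw [hpfac, ← mul_assoc, ← C_mul, inv_mul_cancel₀ (by
        simpa using ha0 : (starRingEnd ℂ) a ≠ 0), C_1, one_mul]
    rw [hprodp, ← mul_assoc, ← C_mul, ← mul_assoc, ← C_mul]
  refine ⟨_, ?_, hrev⟩
  intro hc0
  rw [hc0, C_0, zero_mul] at hrev
  exact hq0 (reverse_eq_zero.mp hrev)

noncomputable def polyOf (W : ℕ) (y : ℕ → ℂ) : ℂ[X] := ∑ n ∈ Finset.range W, C (y n) * X ^ n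

lemma polyOf_coeff (W : ℕ) (y : ℕ → ℂ) {k : ℕ} (hk : k < W) : (polyOf W y).coeff k = y k := by
  rw [polyOf, Polynomial.finset_sum_coeff]
  simp only [coeff_C_mul, coeff_X_pow, mul_ite, mul_one, mul_zero]
  rw [Finset.sum_ite_eq (Finset.range W) k y]
  simp [hk]

lemma polyOf_eval (W : ℕ) (y : ℕ → ℂ) (z : ℂ) :
    eval z (polyOf W y) = ∑ n ∈ Finset.range W, y n * z ^ n := by
  rw [polyOf, Polynomial.eval_finset_sum]
  simp

lemma polyOf_natDegree_le (W : ℕ) (y : ℕ → ℂ) : (polyOf W y).natDegree ≤ W - 1 := by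
  apply Polynomial.natDegree_sum_le_of_forall_le
  intro i hi
  refine le_trans (natDegree_C_mul_X_pow_le _ _) ?_
  have := Finset.mem_range.mp hi
  omega


/-- if all roots of `ŷ` lie on the unit circle, then any `y'`
with the same Fourier intensity function equals `e^{iθ}y`. -/
theorem stmt_6 (W : ℕ) (hW : 1 ≤ W) (y y' : ℕ → ℂ)
    (h0 : y 0 * y (W - 1) ≠ 0)
    (hroots : ∀ z : ℂ, (∑ n ∈ Finset.range W, y n * z ^ n) = 0 →
      ‖z‖ = 1)
    (hint : ∀ ω : ℂ, ‖ω‖ = 1 →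
      (‖∑ n ∈ Finset.range W, y' n * ω ^ n‖) ^ 2
        = (‖∑ n ∈ Finset.range W, y n * ω ^ n‖) ^ 2) :
    ∃ θ : ℝ, ∀ n, n < W → y' n = Complex.exp (θ * Complex.I) * y n := by
  have hy0 : y 0 ≠ 0 := fun h => h0 (by rw [h, zero_mul])
  have hyW : y (W - 1) ≠ 0 := fun h => h0 (by rw [h, mul_zero])
  set P := polyOf W y with hP
  set Q := polyOf W y' with hQ
  have hPev : ∀ z, eval z P = ∑ n ∈ Finset.range W, y n * z ^ n := fun z => polyOf_eval W y z
  have hQev : ∀ z, eval z Q = ∑ n ∈ Finset.range W, y' n * z ^ n := fun z => polyOf_eval W y' z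
  have hPne : P ≠ 0 := fun h => hy0 (by
    rw [← polyOf_coeff W y (show 0 < W by omega), ← hP, h, coeff_zero])
  have hPdeg : P.natDegree = W - 1 := by
    refine le_antisymm (polyOf_natDegree_le W y) (le_natDegree_of_ne_zero ?_)
    rw [hP, polyOf_coeff W y (show W - 1 < W by omega)]
    exact hyW
  set Pd := reverse (P.map (starRingEnd ℂ)) with hPd
  set Qd := reverse (Q.map (starRingEnd ℂ)) with hQd
  set d := Q.natDegree with hd
  -- the key polynomial identity coming from equal intensity on the circle
  have hkey : Q * Qd * X ^ (W - 1) = P * Pd * X ^ d := by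
    apply Polynomial.eq_of_infinite_eval_eq
    apply Set.Infinite.mono (s := {z : ℂ | ‖z‖ = 1}) ?_ aux_circle_infinite
    intro ω hω
    simp only [Set.mem_setOf_eq] at hω ⊢
    rw [eval_mul, eval_mul, eval_mul, eval_mul, eval_pow, eval_pow, eval_X]
    rw [hQd, aux_eval_rev Q hω, hPd, aux_eval_rev P hω, hPdeg]
    have e1 : eval ω Q * (starRingEnd ℂ) (eval ω Q)
        = ((‖eval ω Q‖ : ℝ) : ℂ) ^ 2 := by
      rw [Complex.mul_conj, Complex.normSq_eq_norm_sq]; norm_cast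
    have e2 : eval ω P * (starRingEnd ℂ) (eval ω P)
        = ((‖eval ω P‖ : ℝ) : ℂ) ^ 2 := by
      rw [Complex.mul_conj, Complex.normSq_eq_norm_sq]; norm_cast
    have e3 : ((‖eval ω Q‖ : ℝ) : ℂ) ^ 2
        = ((‖eval ω P‖ : ℝ) : ℂ) ^ 2 := by
      rw [hQev, hPev]
      exact_mod_cast hint ω hω
    calc eval ω Q * (ω ^ d * (starRingEnd ℂ) (eval ω Q)) * ω ^ (W - 1)
        = eval ω Q * (starRingEnd ℂ) (eval ω Q) * (ω ^ d * ω ^ (W - 1)) := by ring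
      _ = ((‖eval ω Q‖ : ℝ) : ℂ) ^ 2 * (ω ^ d * ω ^ (W - 1)) := by rw [e1]
      _ = ((‖eval ω P‖ : ℝ) : ℂ) ^ 2 * (ω ^ d * ω ^ (W - 1)) := by rw [e3]
      _ = eval ω P * (starRingEnd ℂ) (eval ω P) * (ω ^ d * ω ^ (W - 1)) := by rw [e2]
      _ = eval ω P * (ω ^ (W - 1) * (starRingEnd ℂ) (eval ω P)) * ω ^ d := by ring
  -- Pd is a constant multiple of P
  obtain ⟨c, hc0, hcP⟩ := aux_dagger P hPne (fun z hz => hroots z (by rw [← hPev]; exact hz))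
  rw [← hPd] at hcP
  rw [hcP] at hkey
  have hQne : Q ≠ 0 := by
    intro h
    rw [h, zero_mul, zero_mul] at hkey
    have : P * (C c * P) * X ^ d ≠ 0 :=
      mul_ne_zero (mul_ne_zero hPne (mul_ne_zero (C_ne_zero.mpr hc0) hPne))
        (pow_ne_zero _ X_ne_zero)
    exact this hkey.symm
  have hQdne : Qd ≠ 0 := by
    rw [hQd, Ne, reverse_eq_zero, Polynomial.map_eq_zero_iff (RingHom.injective _)]
    exact hQne
  have hdle : d ≤ W - 1 := polyOf_natDegree_le W y'
  have hQdd : Qd.natDegree ≤ d := by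
    rw [hQd]
    refine le_trans (reverse_natDegree_le _) ?_
    rw [natDegree_map_eq_of_injective (RingHom.injective _)]
  have hdeg : d + Qd.natDegree + (W - 1) = (W - 1) + (W - 1) + d := by
    have h1 := congrArg natDegree hkey
    rw [natDegree_mul (mul_ne_zero hQne hQdne) (pow_ne_zero _ X_ne_zero),
      natDegree_mul hQne hQdne, natDegree_X_pow,
      natDegree_mul (mul_ne_zero hPne (mul_ne_zero (C_ne_zero.mpr hc0) hPne))
        (pow_ne_zero _ X_ne_zero),
      natDegree_mul hPne (mul_ne_zero (C_ne_zero.mpr hc0) hPne),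
      natDegree_mul (C_ne_zero.mpr hc0) hPne, natDegree_X_pow, natDegree_C, hPdeg] at h1
    omega
  have hdeq : d = W - 1 := by omega
  have hcancel : Q * Qd = P * (C c * P) := by
    rw [hdeq] at hkey
    exact mul_right_cancel₀ (pow_ne_zero _ X_ne_zero) hkey
  -- roots of Q are unimodular
  have hQroots : ∀ z : ℂ, eval z Q = 0 → ‖z‖ = 1 := by
    intro z hz
    have h1 : eval z (Q * Qd) = 0 := by rw [eval_mul, hz, zero_mul]
    rw [hcancel, eval_mul, eval_mul, eval_C] at h1
    have hPz : eval z P = 0 := by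
      rcases mul_eq_zero.mp h1 with h | h
      · exact h
      · rcases mul_eq_zero.mp h with h' | h'
        · exact absurd h' hc0
        · exact h'
    exact hroots z (by rw [← hPev]; exact hPz)
  obtain ⟨e, he0, heQ⟩ := aux_dagger Q hQne hQroots
  rw [← hQd] at heQ
  rw [heQ] at hcancel
  -- Q ^ 2 is a constant multiple of P ^ 2
  have hQQ : Q ^ 2 = C (c / e) * P ^ 2 := by
    have h1 : C e * Q ^ 2 = C c * P ^ 2 := by linear_combination hcancel
    have h2 := congrArg (fun r => C e⁻¹ * r) h1
    rw [← mul_assoc, ← C_mul, inv_mul_cancel₀ he0, C_1, one_mul, ← mul_assoc, ← C_mul] at h2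
    rw [h2]
    congr 2
    rw [div_eq_mul_inv, mul_comm]
  obtain ⟨μ0, hμ0⟩ := IsAlgClosed.exists_pow_nat_eq (c / e) (n := 2) (by norm_num)
  have hCμ : (C μ0 : ℂ[X]) ^ 2 = C (c / e) := by rw [← map_pow, hμ0]
  have hfact : (Q - C μ0 * P) * (Q + C μ0 * P) = 0 := by
    linear_combination hQQ - P ^ 2 * hCμ
  have hQP : ∃ μ : ℂ, Q = C μ * P := by
    rcases mul_eq_zero.mp hfact with hμ | hμ
    · exact ⟨μ0, sub_eq_zero.mp hμ⟩
    · refine ⟨-μ0, ?_⟩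
      rw [eq_neg_of_add_eq_zero_left hμ, C_neg]
      ring
  obtain ⟨μ, hQP⟩ := hQP
  have hμne : μ ≠ 0 := fun h => hQne (by rw [hQP, h, C_0, zero_mul])
  -- find a point on the circle where P does not vanish
  obtain ⟨ω, hω1, hωP⟩ : ∃ ω : ℂ, ‖ω‖ = 1 ∧ eval ω P ≠ 0 := by
    have hfin := Polynomial.finite_setOf_isRoot hPne
    obtain ⟨ω, hω⟩ := (aux_circle_infinite.diff hfin).nonempty
    exact ⟨ω, hω.1, hω.2⟩
  have habsμ : ‖μ‖ = 1 := by
    have hin := hint ω hω1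
    rw [← hQev, ← hPev, hQP, eval_mul, eval_C, norm_mul, mul_pow] at hin
    have habsP : ‖eval ω P‖ ≠ 0 := by
      simpa using hωP
    have h2 : ‖μ‖ ^ 2 = 1 := by
      have := mul_right_cancel₀ (pow_ne_zero 2 habsP) (hin.trans (one_mul _).symm)
      exact this
    nlinarith [norm_nonneg μ]
  refine ⟨Complex.arg μ, fun n hn => ?_⟩
  have hcoeff : y' n = μ * y n := by
    have h1 := congrArg (fun p => Polynomial.coeff p n) hQP
    rw [hQ, polyOf_coeff W y' hn, coeff_C_mul, hP, polyOf_coeff W y hn] at h1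
    exact h1
  rw [hcoeff]
  congr 1
  have h2 := Complex.norm_mul_exp_arg_mul_I μ
  rw [habsμ] at h2
  simpa using h2.symm
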